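/- For every integer k ≥ 3, the graph G obtained from the complete graph on vertex set S = {1,...,k} by replacing each edge ij with k internally disjoint paths of length two connecting i and j satisfies tw(G) = k − 1 and tree-independence number of G equal to k. -/

import Mathlib

open SimpleGraph

/-- `S` is an independent set in `G`. -/
def IsIndepOn {V : Type} (G : SimpleGraph V) (S : Set V) : Prop :=
  S.Pairwise fun u v => ¬ G.Adj u v

/-- The independence number of `G`. -/
noncomputable def indepNum {V : Type} (G : SimpleGraph V) : ℕ :=
  sSup {n | ∃ S : Set V, IsIndepOn G S ∧ S.ncard = n}

/-- The clique number of `G`. -/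
noncomputable def cliqueNumber {V : Type} (G : SimpleGraph V) : ℕ :=
  sSup {n | ∃ S : Set V, G.IsClique S ∧ S.ncard = n}

/-- A tree decomposition of a graph `G`. -/
structure TreeDecomp {V : Type} (G : SimpleGraph V) where
  ι : Type
  tree : SimpleGraph ι
  tree_isTree : tree.IsTree
  bag : ι → Set V
  mem_bag : ∀ v : V, ∃ t, v ∈ bag t
  edge_bag : ∀ ⦃u v : V⦄, G.Adj u v → ∃ t, u ∈ bag t ∧ v ∈ bag t
  bag_connected : ∀ v : V, (tree.induce {t | v ∈ bag t}).Connected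

/-- The independence number of a family of bags: the maximum independence number
of a subgraph of `G` induced by some bag. -/
noncomputable def bagAlpha {V : Type} (G : SimpleGraph V) {ι : Type} (bag : ι → Set V) : ℕ :=
  sSup {n | ∃ t, ∃ S : Set V, S ⊆ bag t ∧ IsIndepOn G S ∧ S.ncard = n}

/-- The independence number of a tree decomposition. -/
noncomputable def tdAlpha {V : Type} {G : SimpleGraph V} (td : TreeDecomp G) : ℕ :=
  bagAlpha G td.bag

/-- The width of a tree decomposition: maximum bag size minus one. -/
noncomputable def tdWidth {V : Type} {G : SimpleGraph V} (td : TreeDecomp G) : ℕ :=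
  sSup {n | ∃ t, (td.bag t).ncard = n} - 1

/-- The treewidth of `G`. -/
noncomputable def treewidth {V : Type} (G : SimpleGraph V) : ℕ :=
  sInf {w | ∃ td : TreeDecomp G, tdWidth td = w}

/-- The tree-independence number of `G`. -/
noncomputable def treeIndepNum {V : Type} (G : SimpleGraph V) : ℕ :=
  sInf {k | ∃ td : TreeDecomp G, tdAlpha td = k}

/-- A graph is chordal if it has no induced cycle of length at least four. -/
def Chordal {V : Type} (G : SimpleGraph V) : Prop :=
  ∀ n : ℕ, 4 ≤ n → IsEmpty (cycleGraph n ↪g G)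

/-- The graph obtained from the complete graph on `Fin k` by replacing each edge `ij`
with `k` internally disjoint paths of length two connecting `i` and `j`:
for every non-diagonal unordered pair `p` of elements of `Fin k` there are `k`
middle vertices, each adjacent exactly to the two elements of `p`. -/
def multiPathGraph (k : ℕ) :
    SimpleGraph (Fin k ⊕ ({p : Sym2 (Fin k) // ¬ p.IsDiag} × Fin k)) :=
  SimpleGraph.fromRel fun x y =>
    match x, y with
    | .inl i, .inr m => i ∈ m.1.1
    | _, _ => False

namespace TreeAux

variable {ι : Type} {T : SimpleGraph ι}

noncomputable local instance : DecidableEq ι := Classical.decEq ι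

noncomputable def tpath (hT : T.IsTree) (x y : ι) : T.Walk x y :=
  (hT.existsUnique_path x y).choose

lemma tpath_isPath (hT : T.IsTree) (x y : ι) : (tpath hT x y).IsPath :=
  (hT.existsUnique_path x y).choose_spec.1

lemma eq_tpath (hT : T.IsTree) {x y : ι} (p : T.Walk x y) (hp : p.IsPath) :
    p = tpath hT x y :=
  (hT.existsUnique_path x y).choose_spec.2 p hp

lemma tpath_support_subset (hT : T.IsTree) {x y : ι} (w : T.Walk x y) :
    (tpath hT x y).support ⊆ w.support := by
  rw [← eq_tpath hT w.bypass w.bypass_isPath]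
  exact w.support_bypass_subset

lemma tpath_reverse (hT : T.IsTree) (x y : ι) :
    (tpath hT x y).reverse = tpath hT y x :=
  eq_tpath hT _ ((tpath_isPath hT x y).reverse)

lemma mem_tpath_reverse (hT : T.IsTree) {x y c : ι} :
    c ∈ (tpath hT x y).support ↔ c ∈ (tpath hT y x).support := by
  rw [← tpath_reverse hT x y, SimpleGraph.Walk.support_reverse, List.mem_reverse]

/-- connected subsets contain the paths between their points -/
lemma tpath_subset_of_connected (hT : T.IsTree) {S : Set ι}
    (hS : (T.induce S).Connected) {x y : ι} (hx : x ∈ S) (hy : y ∈ S) :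
    ∀ z ∈ (tpath hT x y).support, z ∈ S := by
  obtain ⟨w⟩ := hS.preconnected ⟨x, hx⟩ ⟨y, hy⟩
  have hsub := tpath_support_subset hT (w.map (SimpleGraph.Embedding.induce S).toHom)
  intro z hz
  have := hsub hz
  rw [SimpleGraph.Walk.support_map] at this
  obtain ⟨⟨z', hz'⟩, _, rfl⟩ := List.mem_map.1 this
  exact hz'

lemma reachable_induce_of_walk {S : Set ι} :
    ∀ {x y : ι} (w : T.Walk x y) (_ : ∀ z ∈ w.support, z ∈ S)
      (hx : x ∈ S) (hy : y ∈ S), (T.induce S).Reachable ⟨x, hx⟩ ⟨y, hy⟩ := by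
  intro x y w
  induction w with
  | nil => intro _ _ _; exact Reachable.refl _
  | @cons u v z h q ih =>
    intro hsub hx hy
    have hw : v ∈ S := hsub v (by simp [SimpleGraph.Walk.support_cons])
    have hadj : (T.induce S).Adj ⟨u, hx⟩ ⟨v, hw⟩ := h
    exact hadj.reachable.trans
      (ih (fun z hz => hsub z (by simp [SimpleGraph.Walk.support_cons, hz])) hw hy)

lemma connected_inter (hT : T.IsTree) {S1 S2 : Set ι}
    (h1 : (T.induce S1).Connected) (h2 : (T.induce S2).Connected)
    (hne : (S1 ∩ S2).Nonempty) : (T.induce (S1 ∩ S2)).Connected := by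
  obtain ⟨c, hc1, hc2⟩ := hne
  have hne' : Nonempty ↥(S1 ∩ S2) := ⟨⟨c, hc1, hc2⟩⟩
  rw [connected_iff]
  refine ⟨?_, hne'⟩
  rintro ⟨x, hx1, hx2⟩ ⟨y, hy1, hy2⟩
  have hsub : ∀ z ∈ (tpath hT x y).support, z ∈ S1 ∩ S2 := fun z hz =>
    ⟨tpath_subset_of_connected hT h1 hx1 hy1 z hz,
     tpath_subset_of_connected hT h2 hx2 hy2 z hz⟩
  exact reachable_induce_of_walk (tpath hT x y) hsub ⟨hx1, hx2⟩ ⟨hy1, hy2⟩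

/-- dichotomy for an edge -/
lemma side_dichotomy (hT : T.IsTree) {a b : ι} (hab : T.Adj a b) (t : ι) :
    a ∈ (tpath hT t b).support ∨ b ∈ (tpath hT t a).support := by
  by_cases hb : b ∈ (tpath hT t a).support
  · exact Or.inr hb
  · left
    have hp : ((tpath hT t a).concat hab).IsPath := by
      rw [SimpleGraph.Walk.concat_eq_append]
      rw [SimpleGraph.Walk.isPath_def, SimpleGraph.Walk.support_append]
      refine List.Nodup.append (tpath_isPath hT t a).support_nodup (by simp) ?_
      intro c hc hc'
      simp only [SimpleGraph.Walk.support_cons, SimpleGraph.Walk.support_nil,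
        List.tail_cons, List.mem_singleton] at hc'
      subst hc'
      exact hb hc
    rw [← eq_tpath hT _ hp]
    simp [SimpleGraph.Walk.concat_eq_append, SimpleGraph.Walk.mem_support_append_iff]

lemma end_mem_tail_support {x y : ι} (w : T.Walk x y) (hxy : x ≠ y) :
    y ∈ w.support.tail := by
  cases w with
  | nil => exact absurd rfl hxy
  | cons h q => simpa using q.end_mem_support

/-- if `b` is on the path from `t` to `a`, then `a` is not on the path from `t` to `b`. -/
lemma not_mem_of_mem (hT : T.IsTree) {a b t : ι} (hne : a ≠ b)
    (h : b ∈ (tpath hT t a).support) : a ∉ (tpath hT t b).support := by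
  have htake : (tpath hT t a).takeUntil b h = tpath hT t b :=
    eq_tpath hT _ ((tpath_isPath hT t a).takeUntil h)
  rw [← htake]
  intro ha
  have hspec := (tpath hT t a).take_spec h
  have hnodup := (tpath_isPath hT t a).support_nodup
  rw [← hspec, SimpleGraph.Walk.support_append] at hnodup
  exact (List.disjoint_of_nodup_append hnodup) ha
    (end_mem_tail_support _ (Ne.symm hne))

/-- glue lemma -/
lemma glue (hT : T.IsTree) {a b x y : ι} (hab : T.Adj a b)
    (hx : b ∉ (tpath hT x a).support) (hy : a ∉ (tpath hT b y).support) :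
    a ∈ (tpath hT x y).support ∧ b ∈ (tpath hT x y).support := by
  set p := tpath hT x a with hp
  set q := tpath hT b y with hq
  have hdisj : ∀ c, c ∈ p.support → c ∈ q.support → False := by
    intro c hcp hcq
    -- tpath c a = p.dropUntil c
    have h1 : p.dropUntil c hcp = tpath hT c a :=
      eq_tpath hT _ ((tpath_isPath hT x a).dropUntil hcp)
    have hb_not : b ∉ (tpath hT c a).support := by
      rw [← h1]; intro hmem
      exact hx (SimpleGraph.Walk.support_dropUntil_subset _ _ hmem)
    have h2 : q.takeUntil c hcq = tpath hT b c :=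
      eq_tpath hT _ ((tpath_isPath hT b y).takeUntil hcq)
    have ha_not : a ∉ (tpath hT c b).support := by
      rw [← mem_tpath_reverse hT (x := b)]
      rw [← h2]; intro hmem
      exact hy (SimpleGraph.Walk.support_takeUntil_subset _ _ hmem)
    rcases side_dichotomy hT hab c with h | h
    · exact ha_not h
    · exact hb_not h
  have hpath : (p.append (SimpleGraph.Walk.cons hab q)).IsPath := by
    rw [SimpleGraph.Walk.isPath_def, SimpleGraph.Walk.support_append,
      SimpleGraph.Walk.support_cons, List.tail_cons]
    exact List.Nodup.append (tpath_isPath hT x a).support_nodup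
      (tpath_isPath hT b y).support_nodup (fun c hcp hcq => hdisj c hcp hcq)
  have := eq_tpath hT _ hpath
  rw [← this]
  constructor
  · rw [SimpleGraph.Walk.mem_support_append_iff]; exact Or.inl p.end_mem_support
  · rw [SimpleGraph.Walk.mem_support_append_iff]; right; simp



/-- side propagation: if `b` is on the path `v → a` and `a` is not on the path `t → v`,
then `b` is on the path `t → a`. -/
lemma side_prop (hT : T.IsTree) {a b v t : ι} (hab : T.Adj a b)
    (hv : b ∈ (tpath hT v a).support) (htv : a ∉ (tpath hT t v).support) :
    b ∈ (tpath hT t a).support := by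
  by_contra hb
  -- then a is on path t → b? no: glue directly with x := t, y := v
  have hbv : a ∉ (tpath hT b v).support := by
    rw [mem_tpath_reverse hT]
    exact not_mem_of_mem hT hab.ne hv
  exact htv (glue hT hab hb hbv).1

lemma exists_boundary {P : ι → Prop} :
    ∀ {x z : ι} (p : T.Walk x z), P x → ¬ P z →
      ∃ u w, T.Adj u w ∧ u ∈ p.support ∧ w ∈ p.support ∧ P u ∧ ¬ P w := by
  intro x z p
  induction p with
  | nil => intro h h'; exact absurd h h'
  | @cons u v z h q ih =>
    intro hx hz
    by_cases hv : P v
    · obtain ⟨u', w', h1, h2, h3, h4, h5⟩ := ih hv hz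
      exact ⟨u', w', h1, by simp [SimpleGraph.Walk.support_cons, h2],
        by simp [SimpleGraph.Walk.support_cons, h3], h4, h5⟩
    · exact ⟨u, v, h, by simp, by simp [SimpleGraph.Walk.support_cons], hx, hv⟩

/-- Helly property for three subtrees. -/
lemma helly3 (hT : T.IsTree) {S1 S2 S3 : Set ι}
    (h1 : (T.induce S1).Connected) (h2 : (T.induce S2).Connected)
    (h3 : (T.induce S3).Connected)
    (h12 : (S1 ∩ S2).Nonempty) (h23 : (S2 ∩ S3).Nonempty) (h13 : (S1 ∩ S3).Nonempty) :
    (S1 ∩ S2 ∩ S3).Nonempty := by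
  obtain ⟨x, hx1, hx2⟩ := h12
  obtain ⟨y, hy2, hy3⟩ := h23
  obtain ⟨z, hz1, hz3⟩ := h13
  by_cases hz2 : z ∈ S2
  · exact ⟨z, ⟨hz1, hz2⟩, hz3⟩
  have hsub1 : ∀ c ∈ (tpath hT x z).support, c ∈ S1 :=
    tpath_subset_of_connected hT h1 hx1 hz1
  have hsub23 : ∀ c ∈ (tpath hT x z).support, c ∈ S2 ∪ S3 := by
    intro c hc
    have := tpath_support_subset hT ((tpath hT x y).append (tpath hT y z)) hc
    rw [SimpleGraph.Walk.mem_support_append_iff] at this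
    rcases this with h | h
    · exact Or.inl (tpath_subset_of_connected hT h2 hx2 hy2 c h)
    · exact Or.inr (tpath_subset_of_connected hT h3 hy3 hz3 c h)
  obtain ⟨u, w, huw, hu, hw, hPu, hPw⟩ :=
    exists_boundary (P := fun c => c ∈ S2) (tpath hT x z) hx2 hz2
  have hwS3 : w ∈ S3 := (hsub23 w hw).resolve_left hPw
  rcases side_dichotomy hT huw y with h | h
  · -- u ∈ path y → w ⊆ S3
    exact ⟨u, ⟨hsub1 u hu, hPu⟩, tpath_subset_of_connected hT h3 hy3 hwS3 u h⟩
  · -- w ∈ path y → u ⊆ S2 : contradiction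
    exact absurd (tpath_subset_of_connected hT h2 hy2 hPu w h) hPw

/-- Helly property for finitely many subtrees. -/
lemma hellyFin (hT : T.IsTree) : ∀ (n : ℕ) (f : Fin (n + 1) → Set ι),
    (∀ i, (T.induce (f i)).Connected) → (∀ i j, (f i ∩ f j).Nonempty) →
    (⋂ i, f i).Nonempty := by
  intro n
  induction n with
  | zero =>
    intro f hconn hpair
    obtain ⟨c, hc, _⟩ := hpair 0 0
    exact ⟨c, by simpa [Set.mem_iInter, Fin.forall_fin_one] using hc⟩
  | succ n ih =>
    intro f hconn hpair
    set g : Fin (n + 1) → Set ι := fun i => f i.castSucc ∩ f (Fin.last (n + 1)) with hg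
    have hgconn : ∀ i, (T.induce (g i)).Connected := fun i =>
      connected_inter hT (hconn _) (hconn _) (hpair _ _)
    have hgpair : ∀ i j, (g i ∩ g j).Nonempty := by
      intro i j
      obtain ⟨c, ⟨hc1, hc2⟩, hc3⟩ := helly3 hT (hconn i.castSucc) (hconn j.castSucc)
        (hconn (Fin.last (n+1))) (hpair _ _) (hpair _ _) (hpair _ _)
      exact ⟨c, ⟨hc1, hc3⟩, hc2, hc3⟩
    obtain ⟨c, hc⟩ := ih g hgconn hgpair
    simp only [Set.mem_iInter] at hc
    refine ⟨c, Set.mem_iInter.2 fun i => ?_⟩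
    rcases Fin.eq_castSucc_or_eq_last i with ⟨j, rfl⟩ | rfl
    · exact (hc j).1
    · exact (hc 0).2

/-- first entry point into a set along a path -/
lemma first_hit (hT : T.IsTree) {S : Set ι} :
    ∀ {v u : ι} (q : T.Walk v u), q.IsPath → v ∉ S → u ∈ S →
      ∃ a b, a ∈ S ∧ b ∉ S ∧ T.Adj a b ∧ a ∈ q.support ∧ b ∈ (tpath hT v a).support := by
  intro v0 u0 q0
  induction q0 with
  | nil => intro _ hv hu; exact absurd hu hv
  | @cons v w u h q ih =>
    intro hq hv hu
    by_cases hw : w ∈ S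
    · refine ⟨w, v, hw, hv, h.symm, by simp [SimpleGraph.Walk.support_cons], ?_⟩
      have hp : (SimpleGraph.Walk.cons h (SimpleGraph.Walk.nil)).IsPath := by
        simp [SimpleGraph.Walk.isPath_def, h.ne]
      rw [← eq_tpath hT _ hp]
      simp
    · obtain ⟨a, b, ha, hb, hab, haq, hbsup⟩ := ih hq.of_cons hw hu
      have hvq : v ∉ q.support := (SimpleGraph.Walk.cons_isPath_iff h q).1 hq |>.2
      have htake : q.takeUntil a haq = tpath hT w a :=
        eq_tpath hT _ (hq.of_cons.takeUntil haq)
      have hvwa : v ∉ (tpath hT w a).support := by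
        rw [← htake]
        exact fun hmem => hvq (SimpleGraph.Walk.support_takeUntil_subset _ _ hmem)
      have hp : (SimpleGraph.Walk.cons h (tpath hT w a)).IsPath :=
        (tpath_isPath hT w a).cons hvwa
      refine ⟨a, b, ha, hb, hab, by simp [SimpleGraph.Walk.support_cons, haq], ?_⟩
      rw [← eq_tpath hT _ hp]
      simp [SimpleGraph.Walk.support_cons, hbsup]

/-- Separation lemma: if `Si` and `Sj` are disjoint nonempty subtrees, there is a vertex `a`
contained in every subtree meeting both. -/
lemma separation (hT : T.IsTree) {Si Sj : Set ι}
    (hi : (T.induce Si).Connected) (hj : (T.induce Sj).Connected)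
    (hdisj : Si ∩ Sj = ∅) :
    ∃ a, ∀ S : Set ι, (T.induce S).Connected → (S ∩ Si).Nonempty → (S ∩ Sj).Nonempty →
      a ∈ S := by
  obtain ⟨⟨u, hu⟩⟩ := hi.nonempty
  obtain ⟨⟨v, hv⟩⟩ := hj.nonempty
  have hvSi : v ∉ Si := fun hmem => Set.eq_empty_iff_forall_notMem.1 hdisj v ⟨hmem, hv⟩
  obtain ⟨a, b, ha, hb, hab, -, hbsup⟩ :=
    first_hit hT (tpath hT v u) (tpath_isPath hT v u) hvSi hu
  have haSj : a ∉ Sj := fun hmem => Set.eq_empty_iff_forall_notMem.1 hdisj a ⟨ha, hmem⟩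
  refine ⟨a, fun S hS hSi hSj => ?_⟩
  obtain ⟨x, hxS, hxi⟩ := hSi
  obtain ⟨y, hyS, hyj⟩ := hSj
  -- b ∉ path from x to a (that path is inside Si)
  have hx : b ∉ (tpath hT x a).support :=
    fun hmem => hb (tpath_subset_of_connected hT hi hxi ha b hmem)
  -- a ∉ path from y to v (inside Sj)
  have hyv : a ∉ (tpath hT y v).support :=
    fun hmem => haSj (tpath_subset_of_connected hT hj hyj hv a hmem)
  -- so b ∈ path y → a, hence a ∉ path y → b, hence a ∉ path b → y
  have hba : b ∈ (tpath hT y a).support := side_prop hT hab hbsup hyv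
  have hy : a ∉ (tpath hT b y).support := by
    rw [mem_tpath_reverse hT]
    exact not_mem_of_mem hT hab.ne hba
  have := (glue hT hab hx hy).1
  exact tpath_subset_of_connected hT hS hxS hyS a this

end TreeAux

section MPG

variable {k : ℕ}

lemma mpg_adj_inl_inr (i : Fin k) (m : {p : Sym2 (Fin k) // ¬ p.IsDiag} × Fin k) :
    (multiPathGraph k).Adj (.inl i) (.inr m) ↔ i ∈ m.1.1 := by
  show (Sum.inl i ≠ Sum.inr m ∧ (i ∈ m.1.1 ∨ False)) ↔ _
  simp

lemma mpg_not_adj_inl (i j : Fin k) :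
    ¬ (multiPathGraph k).Adj (.inl i) (.inl j) := by
  show ¬ (_ ≠ _ ∧ (False ∨ False))
  simp

lemma mpg_not_adj_inr (m m' : {p : Sym2 (Fin k) // ¬ p.IsDiag} × Fin k) :
    ¬ (multiPathGraph k).Adj (.inr m) (.inr m') := by
  show ¬ (_ ≠ _ ∧ (False ∨ False))
  simp

lemma indep_inl : IsIndepOn (multiPathGraph k) (Set.range Sum.inl) := by
  rintro x ⟨i, rfl⟩ y ⟨j, rfl⟩ _
  exact mpg_not_adj_inl i j

lemma indep_mid (p : {p : Sym2 (Fin k) // ¬ p.IsDiag}) :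
    IsIndepOn (multiPathGraph k) (Set.range fun l => Sum.inr (p, l)) := by
  rintro x ⟨l, rfl⟩ y ⟨l', rfl⟩ _
  exact mpg_not_adj_inr _ _

lemma ncard_range {α β : Type} [Fintype α] {f : α → β} (hf : Function.Injective f) :
    (Set.range f).ncard = Fintype.card α := by
  rw [← Set.image_univ, Set.ncard_image_of_injective _ hf, Set.ncard_univ,
    Nat.card_eq_fintype_card]

theorem mpg_lower_bound (k : ℕ) (hk : 3 ≤ k) (td : TreeDecomp (multiPathGraph k)) :
    ∃ t, ∃ S : Set (Fin k ⊕ ({p : Sym2 (Fin k) // ¬ p.IsDiag} × Fin k)),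
      S ⊆ td.bag t ∧ IsIndepOn (multiPathGraph k) S ∧ S.ncard = k := by
  obtain ⟨n, rfl⟩ : ∃ n, k = n + 1 := ⟨k - 1, by omega⟩
  set Sub : (Fin (n+1) ⊕ ({p : Sym2 (Fin (n+1)) // ¬ p.IsDiag} × Fin (n+1))) → Set td.ι :=
    fun v => {t | v ∈ td.bag t} with hSub
  have hconn : ∀ v, (td.tree.induce (Sub v)).Connected := td.bag_connected
  by_cases hall : ∀ i j : Fin (n+1), (Sub (.inl i) ∩ Sub (.inl j)).Nonempty
  · obtain ⟨t, ht⟩ := TreeAux.hellyFin td.tree_isTree n (fun i => Sub (.inl i))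
      (fun i => hconn _) (fun i j => hall i j)
    simp only [Set.mem_iInter] at ht
    refine ⟨t, Set.range Sum.inl, ?_, indep_inl, by rw [ncard_range Sum.inl_injective]; simp⟩
    rintro x ⟨i, rfl⟩
    exact ht i
  · push_neg at hall
    obtain ⟨i, j, hij⟩ := hall
    have hne : i ≠ j := by
      rintro rfl
      obtain ⟨t, ht⟩ := td.mem_bag (.inl i)
      exact Set.eq_empty_iff_forall_notMem.1 hij t ⟨ht, ht⟩
    have hdisj : Sub (.inl i) ∩ Sub (.inl j) = ∅ := hij
    obtain ⟨a, ha⟩ := TreeAux.separation td.tree_isTree (hconn (.inl i)) (hconn (.inl j)) hdisj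
    set p : {p : Sym2 (Fin (n+1)) // ¬ p.IsDiag} := ⟨s(i,j), by simp [hne]⟩ with hp
    refine ⟨a, Set.range (fun l => Sum.inr (p, l)), ?_, indep_mid p, ?_⟩
    · rintro x ⟨l, rfl⟩
      have hadj_i : (multiPathGraph (n+1)).Adj (.inl i) (.inr (p, l)) :=
        (mpg_adj_inl_inr i (p, l)).2 (by simp [hp])
      have hadj_j : (multiPathGraph (n+1)).Adj (.inl j) (.inr (p, l)) :=
        (mpg_adj_inl_inr j (p, l)).2 (by simp [hp])
      obtain ⟨t1, ht1i, ht1m⟩ := td.edge_bag hadj_i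
      obtain ⟨t2, ht2j, ht2m⟩ := td.edge_bag hadj_j
      exact ha (Sub (.inr (p, l))) (hconn _) ⟨t1, ht1m, ht1i⟩ ⟨t2, ht2m, ht2j⟩
    · rw [ncard_range (f := fun l => Sum.inr (p, l)) (fun l l' h => by
        simpa using h)]
      simp

end MPG

section Construction

variable (k : ℕ)

abbrev MidT := {p : Sym2 (Fin k) // ¬ p.IsDiag} × Fin k
abbrev VertT := Fin k ⊕ MidT k

/-- star tree with center `none` -/
def starTree : SimpleGraph (Option (MidT k)) := fromRel (fun a _ => a = none)

lemma starTree_adj_some_none (m : MidT k) : (starTree k).Adj (some m) none :=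
  ⟨by simp, Or.inr rfl⟩

lemma no_cycle_at_none (c : (starTree k).Walk none none) : ¬ c.IsCycle := by
  intro hc
  have h3 := hc.three_le_length
  cases c with
  | nil => simp at h3
  | @cons _ w _ h q =>
    have hw : w ≠ none := h.ne'
    cases q with
    | nil => simp at h3
    | @cons _ w' _ h' q' =>
      have hw' : w' = none := by
        rcases h'.2 with h2 | h2
        · exact absurd h2 hw
        · exact h2
      subst hw'
      cases q' with
      | nil => simp [SimpleGraph.Walk.length_cons] at h3
      | @cons _ w'' _ h'' q'' =>
        have hnd := hc.support_nodup
        simp only [SimpleGraph.Walk.support_cons, List.tail_cons, List.nodup_cons] at hnd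
        exact hnd.2.1 q''.end_mem_support

lemma starTree_isTree : (starTree k).IsTree := by
  constructor
  · rw [connected_iff]
    refine ⟨fun x y => ?_, ⟨none⟩⟩
    have h : ∀ z : Option (MidT k), (starTree k).Reachable z none := by
      intro z
      rcases z with _ | m
      · exact Reachable.refl _
      · exact (starTree_adj_some_none k m).reachable
    exact (h x).trans (h y).symm
  · intro v c hc
    have hnone : none ∈ c.support := by
      cases c with
      | nil => exact absurd hc.three_le_length (by simp)
      | @cons _ w _ h q =>
        rcases h.2 with h2 | h2
        · subst h2; exact SimpleGraph.Walk.start_mem_support _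
        · subst h2
          simp [SimpleGraph.Walk.support_cons, SimpleGraph.Walk.start_mem_support]
    exact no_cycle_at_none k (c.rotate none hnone) (hc.rotate hnone)

/-- the bags of the star decomposition -/
def bag0 : Option (MidT k) → Set (VertT k)
  | none => Set.range Sum.inl
  | some m => {x | ∃ i : Fin k, i ∈ m.1.1 ∧ x = Sum.inl i} ∪ {Sum.inr m}

lemma inl_mem_bag0_none (i : Fin k) : (Sum.inl i : VertT k) ∈ bag0 k none := ⟨i, rfl⟩

lemma inr_mem_bag0_iff (m m' : MidT k) :
    (Sum.inr m : VertT k) ∈ bag0 k (some m') ↔ m = m' := by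
  simp only [bag0, Set.mem_union, Set.mem_setOf_eq, Set.mem_singleton_iff]
  constructor
  · rintro (⟨i, _, h⟩ | h)
    · exact absurd h (by simp)
    · simpa using h
  · rintro rfl; exact Or.inr rfl

lemma inr_not_mem_bag0_none (m : MidT k) : (Sum.inr m : VertT k) ∉ bag0 k none := by
  rintro ⟨i, h⟩
  simp at h

noncomputable def td0 : TreeDecomp (multiPathGraph k) where
  ι := Option (MidT k)
  tree := starTree k
  tree_isTree := starTree_isTree k
  bag := bag0 k
  mem_bag v := by
    rcases v with i | m
    · exact ⟨none, i, rfl⟩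
    · exact ⟨some m, Or.inr rfl⟩
  edge_bag u v h := by
    rcases u with i | m <;> rcases v with j | m'
    · exact absurd h (mpg_not_adj_inl i j)
    · exact ⟨some m', Or.inl ⟨i, (mpg_adj_inl_inr i m').1 h, rfl⟩, Or.inr rfl⟩
    · exact ⟨some m, Or.inr rfl, Or.inl ⟨j, (mpg_adj_inl_inr j m).1 h.symm, rfl⟩⟩
    · exact absurd h (mpg_not_adj_inr m m')
  bag_connected v := by
    rcases v with i | m
    · rw [connected_iff]
      refine ⟨?_, ⟨⟨none, inl_mem_bag0_none k i⟩⟩⟩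
      have hreach : ∀ a : {t | (Sum.inl i : VertT k) ∈ bag0 k t},
          ((starTree k).induce _).Reachable a ⟨none, inl_mem_bag0_none k i⟩ := by
        rintro ⟨a, ha⟩
        rcases a with _ | m
        · exact Reachable.refl _
        · have hadj : ((starTree k).induce {t | (Sum.inl i : VertT k) ∈ bag0 k t}).Adj
            ⟨some m, ha⟩ ⟨none, inl_mem_bag0_none k i⟩ := starTree_adj_some_none k m
          exact hadj.reachable
      intro x y
      exact (hreach x).trans (hreach y).symm
    · rw [connected_iff]
      have hmem : ∀ a : {t | (Sum.inr m : VertT k) ∈ bag0 k t}, a = ⟨some m, Or.inr rfl⟩ := by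
        rintro ⟨a, ha⟩
        rcases a with _ | m'
        · exact absurd ha (inr_not_mem_bag0_none k m)
        · obtain rfl := (inr_mem_bag0_iff k m m').1 ha
          rfl
      refine ⟨fun x y => ?_, ⟨⟨some m, Or.inr rfl⟩⟩⟩
      rw [hmem x, hmem y]

lemma ncard_bag0_none : (bag0 k none).ncard = k := by
  show (Set.range (Sum.inl : Fin k → VertT k)).ncard = k
  rw [ncard_range Sum.inl_injective]
  simp

lemma ncard_bag0_some (m : MidT k) : (bag0 k (some m)).ncard = 3 := by
  obtain ⟨⟨p, hd⟩, l⟩ := m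
  induction p using Sym2.ind with
  | _ i j =>
    have hij : i ≠ j := by simpa using hd
    have : bag0 k (some (⟨s(i, j), hd⟩, l)) =
        insert (Sum.inl i) (insert (Sum.inl j) {Sum.inr (⟨s(i, j), hd⟩, l)}) := by
      ext x
      simp only [bag0, Set.mem_union, Set.mem_setOf_eq, Set.mem_singleton_iff,
        Set.mem_insert_iff, Sym2.mem_iff]
      constructor
      · rintro (⟨i', (rfl | rfl), rfl⟩ | rfl) <;> simp
      · rintro (rfl | rfl | rfl)
        · exact Or.inl ⟨i, Or.inl rfl, rfl⟩
        · exact Or.inl ⟨j, Or.inr rfl, rfl⟩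
        · exact Or.inr rfl
    rw [this, Set.ncard_insert_of_notMem (by simp [hij]), Set.ncard_insert_of_notMem (by simp),
      Set.ncard_singleton]

end Construction

lemma tdWidth_td0 (k : ℕ) (hk : 3 ≤ k) : tdWidth (td0 k) = k - 1 := by
  unfold tdWidth
  have hgr : IsGreatest {n | ∃ t, ((td0 k).bag t).ncard = n} k := by
    constructor
    · exact ⟨none, ncard_bag0_none k⟩
    · rintro n ⟨t, rfl⟩
      rcases t with _ | m
      · rw [show ((td0 k).bag none).ncard = k from ncard_bag0_none k]
      · rw [show ((td0 k).bag (some m)).ncard = 3 from ncard_bag0_some k m]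
        exact hk
  rw [hgr.csSup_eq]

lemma tdAlpha_td0 (k : ℕ) (hk : 3 ≤ k) : tdAlpha (td0 k) = k := by
  unfold tdAlpha bagAlpha
  have hgr : IsGreatest {n | ∃ t, ∃ S : Set (VertT k),
      S ⊆ (td0 k).bag t ∧ IsIndepOn (multiPathGraph k) S ∧ S.ncard = n} k := by
    constructor
    · refine ⟨none, Set.range Sum.inl, subset_rfl, indep_inl, ?_⟩
      rw [ncard_range Sum.inl_injective]; simp
    · rintro n ⟨t, S, hsub, -, rfl⟩
      have h1 : S.ncard ≤ ((td0 k).bag t).ncard := Set.ncard_le_ncard hsub (Set.toFinite _)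
      rcases t with _ | m
      · rwa [show ((td0 k).bag none).ncard = k from ncard_bag0_none k] at h1
      · rw [show ((td0 k).bag (some m)).ncard = 3 from ncard_bag0_some k m] at h1
        omega
  rw [hgr.csSup_eq]

theorem mpg_main (k : ℕ) (hk : 3 ≤ k) :
    treewidth (multiPathGraph k) = k - 1 ∧ treeIndepNum (multiPathGraph k) = k := by
  have hV : ∀ S : Set (VertT k), S.ncard ≤ Nat.card (VertT k) := fun S => by
    have := Set.ncard_le_ncard (Set.subset_univ S) Set.finite_univ
    rwa [Set.ncard_univ] at this
  constructor
  · apply le_antisymm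
    · exact Nat.sInf_le ⟨td0 k, tdWidth_td0 k hk⟩
    · refine le_csInf ⟨k - 1, td0 k, tdWidth_td0 k hk⟩ ?_
      rintro w ⟨td, rfl⟩
      obtain ⟨t, S, hsub, hind, hcard⟩ := mpg_lower_bound k hk td
      have h1 : k ≤ (td.bag t).ncard := by
        have := Set.ncard_le_ncard hsub (Set.toFinite _)
        omega
      have h2 : (td.bag t).ncard ≤ sSup {n | ∃ t, (td.bag t).ncard = n} :=
        le_csSup ⟨Nat.card (VertT k), by rintro n ⟨t', rfl⟩; exact hV _⟩ ⟨t, rfl⟩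
      exact Nat.sub_le_sub_right (h1.trans h2) 1
  · apply le_antisymm
    · exact Nat.sInf_le ⟨td0 k, tdAlpha_td0 k hk⟩
    · refine le_csInf ⟨k, td0 k, tdAlpha_td0 k hk⟩ ?_
      rintro w ⟨td, rfl⟩
      obtain ⟨t, S, hsub, hind, hcard⟩ := mpg_lower_bound k hk td
      exact le_csSup ⟨Nat.card (VertT k), by rintro n ⟨t', S', -, -, rfl⟩; exact hV _⟩
        ⟨t, S, hsub, hind, hcard⟩


theorem stmt8 (k : ℕ) (hk : 3 ≤ k) :
    treewidth (multiPathGraph k) = k - 1 ∧ treeIndepNum (multiPathGraph k) = k := by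
  exact mpg_main k hk
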